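/- arXiv:1902.10804 — 5 statements merged into one kernel-verified Lean document; each statement's English description precedes it below -/
import Mathlib

section
/- Let φ : A* → M be a monoid homomorphism into a finite monoid M. If (x₀, a, x₁) is a good factorization with respect to φ, x₀' is a suffix of x₀ (i.e., x₀ = s·x₀' for some s ∈ A*), and x₁' is a prefix of x₁ (i.e., x₁ = x₁'·t for some t ∈ A*), then (x₀', a, x₁') is also a good factorization with respect to φ. -/
/-- Green `R`-quasi-order on a monoid: `s ≤_R t` iff `s ∈ tM`. -/
def RLe {M : Type*} [Monoid M] (s t : M) : Prop := ∃ x, s = t * x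

/-- Strict Green `R`-order. -/
def RLt {M : Type*} [Monoid M] (s t : M) : Prop := RLe s t ∧ ¬ RLe t s

/-- Green `L`-quasi-order on a monoid: `s ≤_L t` iff `s ∈ Mt`. -/
def LLe {M : Type*} [Monoid M] (s t : M) : Prop := ∃ x, s = x * t

/-- Strict Green `L`-order. -/
def LLt {M : Type*} [Monoid M] (s t : M) : Prop := LLe s t ∧ ¬ LLe t s

/-- `(x₀, a, x₁)` is a good factorization with respect to `φ`:
`φ(x₀a) <_R φ(x₀)` and `φ(ax₁) <_L φ(x₁)`. -/
def GoodFact {A M : Type*} [Monoid M] (φ : FreeMonoid A →* M)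
    (x₀ : FreeMonoid A) (a : A) (x₁ : FreeMonoid A) : Prop :=
  RLt (φ (x₀ * FreeMonoid.of a)) (φ x₀) ∧ LLt (φ (FreeMonoid.of a * x₁)) (φ x₁)

/-- `(x₀, a, x₁)` is a good factorization of the word `w` with respect to `φ`. -/
def GoodFactOf {A M : Type*} [Monoid M] (φ : FreeMonoid A →* M)
    (w x₀ : FreeMonoid A) (a : A) (x₁ : FreeMonoid A) : Prop :=
  w = x₀ * FreeMonoid.of a * x₁ ∧ GoodFact φ x₀ a x₁

theorem goodFact_shorten {A M : Type*} [Monoid M] [Finite M] (φ : FreeMonoid A →* M)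
    (x₀ x₁ x₀' x₁' s t : FreeMonoid A) (a : A)
    (h : GoodFact φ x₀ a x₁) (hs : x₀ = s * x₀') (ht : x₁ = x₁' * t) :
    GoodFact φ x₀' a x₁' := by
  obtain ⟨⟨_, hR⟩, ⟨_, hL⟩⟩ := h
  subst hs; subst ht
  constructor
  · refine ⟨⟨φ (FreeMonoid.of a), by simp⟩, ?_⟩
    rintro ⟨u, hu⟩
    exact hR ⟨u, by simp only [map_mul, mul_assoc] at hu ⊢; rw [← hu]⟩
  · refine ⟨⟨φ (FreeMonoid.of a), by simp⟩, ?_⟩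
    rintro ⟨u, hu⟩
    refine hL ⟨u, ?_⟩
    simp only [map_mul, ← mul_assoc] at hu ⊢
    rw [← hu]
end

section
/- Let φ : A* → M be a monoid homomorphism into a finite monoid M. The set S of words in A* admitting no good factorization with respect to φ is a submonoid of A*: the empty word has no good factorization, and if x and y have no good factorizations, then neither does xy. -/
/-- `w` admits no good factorization with respect to `φ`. -/
def HasNoGoodFact {A M : Type*} [Monoid M] (φ : FreeMonoid A →* M) (w : FreeMonoid A) : Prop :=
  ∀ (x₀ : FreeMonoid A) (a : A) (x₁ : FreeMonoid A), ¬ GoodFactOf φ w x₀ a x₁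

/-- Splitting a factorization of a concatenation at a distinguished letter. -/
lemma list_split_aux {A : Type*} (x y x₀ x₁ : List A) (a : A)
    (h : x ++ y = x₀ ++ a :: x₁) :
    (∃ z, x = x₀ ++ a :: z ∧ x₁ = z ++ y) ∨ (∃ z, x₀ = x ++ z ∧ y = z ++ a :: x₁) := by
  rcases List.append_eq_append_iff.mp h with ⟨a', h1, h2⟩ | ⟨c', h1, h2⟩
  · exact Or.inr ⟨a', h1, h2⟩
  · cases c' with
    | nil => exact Or.inr ⟨[], by simpa using h1.symm, by simpa using h2.symm⟩
    | cons b z =>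
      obtain ⟨rfl, hz⟩ : b = a ∧ x₁ = z ++ y := by
        have := h2
        simp only [List.cons_append, List.cons.injEq] at this
        exact ⟨this.1.symm, this.2⟩
      exact Or.inl ⟨z, by simpa using h1, hz⟩

theorem noGoodFact_submonoid {A M : Type*} [Monoid M] [Finite M] (φ : FreeMonoid A →* M) :
    HasNoGoodFact φ 1 ∧
      ∀ x y : FreeMonoid A, HasNoGoodFact φ x → HasNoGoodFact φ y →
        HasNoGoodFact φ (x * y) := by
  constructor
  · rintro x₀ a x₁ ⟨h, -⟩
    have h' := congrArg FreeMonoid.toList h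
    simp only [FreeMonoid.toList_mul, FreeMonoid.toList_one, FreeMonoid.toList_of] at h'
    exact absurd h'.symm (by simp)
  · rintro x y hx hy x₀ a x₁ ⟨heq, hR, hL⟩
    have h' := congrArg FreeMonoid.toList heq
    simp only [FreeMonoid.toList_mul, FreeMonoid.toList_of] at h'
    rw [List.append_assoc, List.singleton_append] at h'
    rcases list_split_aux _ _ _ _ _ h' with ⟨z, hxz, hz⟩ | ⟨z, hxz, hz⟩
    · -- the letter a lies inside x : good factorization (x₀, a, z) of x
      have hxeq : x = x₀ * FreeMonoid.of a * FreeMonoid.ofList z := by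
        apply FreeMonoid.toList.injective
        simpa [List.append_assoc] using hxz
      have hx1 : x₁ = FreeMonoid.ofList z * y := by
        apply FreeMonoid.toList.injective
        simpa using hz
      refine hx x₀ a (FreeMonoid.ofList z) ⟨hxeq, hR, ⟨φ (FreeMonoid.of a), by
        rw [map_mul]⟩, ?_⟩
      rintro ⟨u, hu⟩
      refine hL.2 ⟨u, ?_⟩
      calc φ x₁ = φ (FreeMonoid.ofList z) * φ y := by rw [hx1, map_mul]
        _ = (u * φ (FreeMonoid.of a * FreeMonoid.ofList z)) * φ y := by rw [hu]
        _ = u * φ (FreeMonoid.of a * x₁) := by simp only [hx1, map_mul, mul_assoc]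
    · -- the letter a lies inside y : good factorization (z, a, x₁) of y
      have hx0 : x₀ = x * FreeMonoid.ofList z := by
        apply FreeMonoid.toList.injective; simpa using hxz
      have hyeq : y = FreeMonoid.ofList z * FreeMonoid.of a * x₁ := by
        apply FreeMonoid.toList.injective
        simpa [List.append_assoc] using hz
      refine hy (FreeMonoid.ofList z) a x₁ ⟨hyeq, ⟨⟨φ (FreeMonoid.of a), by rw [map_mul]⟩, ?_⟩,
        hL⟩
      rintro ⟨u, hu⟩
      refine hR.2 ⟨u, ?_⟩
      calc φ x₀ = φ x * φ (FreeMonoid.ofList z) := by rw [hx0, map_mul]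
        _ = φ x * (φ (FreeMonoid.ofList z * FreeMonoid.of a) * u) := by rw [hu]
        _ = φ (x₀ * FreeMonoid.of a) * u := by simp only [hx0, map_mul, mul_assoc]
end

section
/- Let φ : A* → M be a surjective monoid homomorphism onto a finite monoid M. Define x ∼_φ y iff (1) φ(x) = φ(y), (2) every good factorization of x is equivalent to some good factorization of y, and (3) every good factorization of y is equivalent to some good factorization of x (where good factorizations (x₀,a,x₁) and (y₀,b,y₁) are equivalent when φ(x₀)=φ(y₀), a=b, φ(x₁)=φ(y₁)). Then ∼_φ is a monoid congruence on A*. -/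
/-- The Pin–Thérien relation `∼_φ`: same image under `φ`, and the good
factorizations of each word are equivalent to good factorizations of the other. -/
def PTRel {A M : Type*} [Monoid M] (φ : FreeMonoid A →* M) (x y : FreeMonoid A) : Prop :=
  φ x = φ y ∧
    (∀ (x₀ : FreeMonoid A) (a : A) (x₁ : FreeMonoid A), GoodFactOf φ x x₀ a x₁ →
      ∃ y₀ y₁ : FreeMonoid A, GoodFactOf φ y y₀ a y₁ ∧ φ x₀ = φ y₀ ∧ φ x₁ = φ y₁) ∧
    (∀ (y₀ : FreeMonoid A) (a : A) (y₁ : FreeMonoid A), GoodFactOf φ y y₀ a y₁ →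
      ∃ x₀ x₁ : FreeMonoid A, GoodFactOf φ x x₀ a x₁ ∧ φ x₀ = φ y₀ ∧ φ x₁ = φ y₁)

lemma RLt_cancel {M : Type*} [Monoid M] {p u v : M} (h : RLt (p * u * v) (p * u)) :
    RLt (u * v) u := by
  refine ⟨⟨v, rfl⟩, fun ⟨m, hm⟩ => h.2 ⟨m, ?_⟩⟩
  conv_lhs => rw [hm]
  simp [mul_assoc]

lemma LLt_cancel {M : Type*} [Monoid M] {p u v : M} (h : LLt (v * u * p) (u * p)) :
    LLt (v * u) u := by
  refine ⟨⟨v, rfl⟩, fun ⟨m, hm⟩ => h.2 ⟨m, ?_⟩⟩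
  conv_lhs => rw [hm]
  simp [mul_assoc]

lemma list_split {A : Type*} (x z u₀ u₁ : List A) (a : A) (h : x ++ z = u₀ ++ a :: u₁) :
    (∃ t, x = u₀ ++ a :: t ∧ u₁ = t ++ z) ∨ (∃ s, u₀ = x ++ s ∧ z = s ++ a :: u₁) := by
  rcases List.append_eq_append_iff.mp h with ⟨s, hs1, hs2⟩ | ⟨c, hc1, hc2⟩
  · exact Or.inr ⟨s, hs1, hs2⟩
  · cases c with
    | nil => exact Or.inr ⟨[], (by simpa using hc1.symm), by simpa using hc2.symm⟩
    | cons b t =>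
      obtain ⟨rfl, h2⟩ : a = b ∧ u₁ = t ++ z := by simpa using hc2
      exact Or.inl ⟨t, hc1, h2⟩

lemma fm_split {A : Type*} (x z u₀ u₁ : FreeMonoid A) (a : A)
    (h : x * z = u₀ * FreeMonoid.of a * u₁) :
    (∃ t, x = u₀ * FreeMonoid.of a * t ∧ u₁ = t * z) ∨
      (∃ s, u₀ = x * s ∧ z = s * FreeMonoid.of a * u₁) := by
  have h' : x.toList ++ z.toList = u₀.toList ++ a :: u₁.toList := by
    have := congrArg FreeMonoid.toList h
    simpa [FreeMonoid.toList_mul, FreeMonoid.toList_of] using this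
  rcases list_split _ _ _ _ _ h' with ⟨t, h1, h2⟩ | ⟨s, h1, h2⟩
  · refine Or.inl ⟨FreeMonoid.ofList t, ?_, ?_⟩
    · apply FreeMonoid.toList.injective
      simpa [FreeMonoid.toList_mul, FreeMonoid.toList_of] using h1
    · apply FreeMonoid.toList.injective
      simpa [FreeMonoid.toList_mul] using h2
  · refine Or.inr ⟨FreeMonoid.ofList s, ?_, ?_⟩
    · apply FreeMonoid.toList.injective
      simpa [FreeMonoid.toList_mul] using h1
    · apply FreeMonoid.toList.injective
      simpa [FreeMonoid.toList_mul, FreeMonoid.toList_of] using h2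

lemma PTRel_mul_forward {A M : Type*} [Monoid M] (φ : FreeMonoid A →* M)
    {x y z w : FreeMonoid A} (hxy : PTRel φ x y) (hzw : PTRel φ z w) :
    ∀ (u₀ : FreeMonoid A) (a : A) (u₁ : FreeMonoid A), GoodFactOf φ (x * z) u₀ a u₁ →
      ∃ v₀ v₁ : FreeMonoid A, GoodFactOf φ (y * w) v₀ a v₁ ∧ φ u₀ = φ v₀ ∧ φ u₁ = φ v₁ := by
  rintro u₀ a u₁ ⟨heq, hR, hL⟩
  rcases fm_split x z u₀ u₁ a heq with ⟨t, hx, hu1⟩ | ⟨s, hu0, hz⟩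
  · -- cut lies inside x
    have hL' : LLt (φ (FreeMonoid.of a) * φ t * φ z) (φ t * φ z) := by
      simpa [hu1, map_mul, mul_assoc] using hL
    have hLt : LLt (φ (FreeMonoid.of a * t)) (φ t) := by
      simpa [map_mul] using LLt_cancel hL'
    obtain ⟨y₀, y₁, ⟨hy, hyR, hyL⟩, h0, h1⟩ := hxy.2.1 u₀ a t ⟨hx, hR, hLt⟩
    have e1 : φ u₁ = φ (y₁ * w) := by
      simp [hu1, map_mul, h1, hzw.1]
    refine ⟨y₀, y₁ * w, ⟨?_, hyR, ?_⟩, h0, e1⟩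
    · rw [hy]; simp [mul_assoc]
    · have e1' : φ u₁ = φ y₁ * φ w := by rw [e1, map_mul]
      have h2 : LLt (φ (FreeMonoid.of a) * (φ y₁ * φ w)) (φ y₁ * φ w) := by
        rw [← e1']; simpa [map_mul] using hL
      simpa [map_mul, mul_assoc] using h2
  · -- cut lies inside z
    have hR' : RLt (φ x * φ s * φ (FreeMonoid.of a)) (φ x * φ s) := by
      simpa [hu0, map_mul, mul_assoc] using hR
    have hRt : RLt (φ (s * FreeMonoid.of a)) (φ s) := by
      simpa [map_mul] using RLt_cancel hR'
    obtain ⟨w₀, w₁, ⟨hw, hwR, hwL⟩, h0, h1⟩ := hzw.2.1 s a u₁ ⟨hz, hRt, hL⟩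
    have e0 : φ u₀ = φ (y * w₀) := by
      simp [hu0, map_mul, hxy.1, h0]
    refine ⟨y * w₀, w₁, ⟨?_, ?_, hwL⟩, e0, h1⟩
    · rw [hw]; simp [mul_assoc]
    · have : φ (u₀ * FreeMonoid.of a) = φ (y * w₀ * FreeMonoid.of a) := by
        rw [map_mul, map_mul, e0]
      rw [← this, ← e0]; exact hR

theorem PTRel_is_congruence {A M : Type*} [Monoid M] [Finite M] (φ : FreeMonoid A →* M)
    (hsurj : Function.Surjective φ) :
    Equivalence (PTRel φ) ∧
      ∀ x y z w : FreeMonoid A, PTRel φ x y → PTRel φ z w →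
        PTRel φ (x * z) (y * w) := by
  have hsymm : ∀ {x y : FreeMonoid A}, PTRel φ x y → PTRel φ y x := by
    rintro x y ⟨h1, h2, h3⟩
    refine ⟨h1.symm, fun y₀ a y₁ hy => ?_, fun x₀ a x₁ hx => ?_⟩
    · obtain ⟨x₀, x₁, hx, e0, e1⟩ := h3 y₀ a y₁ hy
      exact ⟨x₀, x₁, hx, e0.symm, e1.symm⟩
    · obtain ⟨y₀, y₁, hy, e0, e1⟩ := h2 x₀ a x₁ hx
      exact ⟨y₀, y₁, hy, e0.symm, e1.symm⟩
  refine ⟨⟨fun x => ⟨rfl, fun x₀ a x₁ h => ⟨x₀, x₁, h, rfl, rfl⟩,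
      fun x₀ a x₁ h => ⟨x₀, x₁, h, rfl, rfl⟩⟩, hsymm, fun h1 h2 => ⟨h1.1.trans h2.1, ?_, ?_⟩⟩,
    fun x y z w hxy hzw => ⟨by rw [map_mul, map_mul, hxy.1, hzw.1],
      PTRel_mul_forward φ hxy hzw, fun v₀ a v₁ hv => ?_⟩⟩
  · intro x₀ a x₁ h
    obtain ⟨y₀, y₁, hy, e0, e1⟩ := h1.2.1 x₀ a x₁ h
    obtain ⟨z₀, z₁, hz, f0, f1⟩ := h2.2.1 y₀ a y₁ hy
    exact ⟨z₀, z₁, hz, e0.trans f0, e1.trans f1⟩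
  · intro z₀ a z₁ h
    obtain ⟨y₀, y₁, hy, e0, e1⟩ := h2.2.2 z₀ a z₁ h
    obtain ⟨x₀, x₁, hx, f0, f1⟩ := h1.2.2 y₀ a y₁ hy
    exact ⟨x₀, x₁, hx, f0.trans e0, f1.trans e1⟩
  · obtain ⟨u₀, u₁, hu, e0, e1⟩ :=
      PTRel_mul_forward φ (hsymm hxy) (hsymm hzw) v₀ a v₁ hv
    exact ⟨u₀, u₁, hu, e0.symm, e1.symm⟩
end

section
/- Let S be a semigroup and let s, t ∈ S be regular elements, say s = s·x·s and t = t·y·t for some x, y ∈ S. If the product (x·s)·(t·y) is itself a regular element of S (i.e., there exists z ∈ S with x s t y = x s t y · z · x s t y), then the product s·t is regular in S. -/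
theorem regular_product {S : Type*} [Semigroup S] (s t x y : S)
    (hs : s = s * x * s) (ht : t = t * y * t)
    (h : ∃ z, x * s * t * y = x * s * t * y * z * (x * s * t * y)) :
    ∃ v, s * t = s * t * v * (s * t) := by
  obtain ⟨z, hz⟩ := h
  refine ⟨y * z * x, ?_⟩
  have key : s * t = s * (x * s * t * y * z * (x * s * t * y)) * t := by
    rw [← hz]
    conv_lhs => rw [hs, ht]
    simp only [mul_assoc]
  have h1 : s * (x * s * t * y * z * (x * s * t * y)) * t
      = (s * x * s) * (t * y) * z * (x * s) * (t * y * t) := by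
    simp only [mul_assoc]
  conv_lhs => rw [key]
  rw [h1, ← hs, ← ht]
  simp only [mul_assoc]
end

section
/- Let S be a semigroup and let π, ρ, x, y ∈ S satisfy: π = π·x·π, ρ = ρ·y·ρ, x·π = y·ρ, and π·x = ρ·x·π·x. Then ρ = π. -/
theorem locality_core {S : Type*} [Semigroup S] (π ρ x y : S)
    (h1 : π = π * x * π) (h2 : ρ = ρ * y * ρ)
    (h3 : x * π = y * ρ) (h4 : π * x = ρ * x * π * x) :
    ρ = π := by
  calc ρ = ρ * y * ρ := h2
    _ = ρ * (y * ρ) := by rw [mul_assoc]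
    _ = ρ * (x * π) := by rw [h3]
    _ = ρ * x * π := by rw [mul_assoc]
    _ = ρ * x * (π * x * π) := by rw [← h1]
    _ = ρ * x * (π * x) * π := by rw [← mul_assoc]
    _ = ρ * x * π * x * π := by rw [← mul_assoc]
    _ = π * x * π := by rw [← h4]
    _ = π := h1.symm
end
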